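/- The image of any nonconstant continuous polynomial map f : ℝ_{≥0}^N → ℝ is an unbounded interval: f(ℝ_{≥0}^N) is a convex subset of ℝ that is not bounded. -/
import Mathlib


namespace PaperPoly

/-- `ADegLE d f` means that `f : S → G`, from an additive commutative semigroup to an
additive commutative group, is a polynomial map of degree at most `d ∈ ℕ`: the base case
`ADegLE 0 f` means `f` is constant, and `ADegLE (d+1) f` means that for every `s : S` the
difference map `D_s f : t ↦ f (s+t) - f t` satisfies `ADegLE d`. -/
def ADegLE {S : Type*} [AddCommSemigroup S] {G : Type*} [AddCommGroup G] :
    ℕ → (S → G) → Prop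
  | 0 => fun f => ∀ t t' : S, f t = f t'
  | d + 1 => fun f => ∀ s : S, ADegLE d (fun t => f (s + t) - f t)

/-- A bounded polynomial map to ℝ is constant. -/
lemma constant_of_bounded {S : Type*} [AddCommSemigroup S] (d : ℕ) :
    ∀ (f : S → ℝ) (C : ℝ), ADegLE d f → (∀ t, |f t| ≤ C) → ∀ t t', f t = f t' := by
  induction d with
  | zero => intro f C hf _; exact hf
  | succ d ih =>
    intro f C hf hb
    have key : ∀ s t : S, f (s + t) = f t := by
      intro s t
      have hg := hf s
      have hgb : ∀ u, |f (s + u) - f u| ≤ C + C := fun u =>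
        (abs_sub _ _).trans (add_le_add (hb _) (hb _))
      have hconst := ih _ _ hg hgb
      set c := f (s + t) - f t with hc
      -- iterate s
      let a : ℕ → S := fun n => Nat.rec t (fun _ u => s + u) n
      have ha : ∀ n : ℕ, f (a n) = f t + n * c := by
        intro n
        induction n with
        | zero => simp [a]
        | succ n ihn =>
          have : f (s + a n) - f (a n) = c := hconst (a n) t
          have h2 : f (a (n + 1)) = f (a n) + c := by
            simp only [a] at this ⊢
            linarith [this]
          rw [h2, ihn]
          push_cast
          ring
      have hcb : ∀ n : ℕ, (n : ℝ) * |c| ≤ C + C + C := by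
        intro n
        have := ha n
        have h1 : |(n : ℝ) * c| ≤ C + C := by
          have : (n : ℝ) * c = f (a n) - f t := by linarith [ha n]
          rw [this]
          exact (abs_sub _ _).trans (add_le_add (hb _) (hb _))
        calc (n : ℝ) * |c| = |(n : ℝ) * c| := by
              rw [abs_mul, Nat.abs_cast]
          _ ≤ C + C := h1
          _ ≤ C + C + C := by have := (abs_nonneg (f t)).trans (hb t); linarith
      have hc0 : c = 0 := by
        by_contra hne
        have hpos : 0 < |c| := abs_pos.mpr hne
        obtain ⟨n, hn⟩ := exists_nat_gt ((C + C + C) / |c|)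
        have := hcb n
        have : (n : ℝ) ≤ (C + C + C) / |c| := (le_div_iff₀ hpos).mpr this
        linarith
      have : f (s + t) - f t = 0 := hc0
      linarith
    intro t t'
    calc f t = f (t' + t) := (key t' t).symm
      _ = f (t + t') := by rw [add_comm]
      _ = f t' := key t t'

/-- The image of any nonconstant continuous polynomial map `f : ℝ_{≥0}^N → ℝ` is an
unbounded interval: the range of `f` is a convex subset of `ℝ` which is not bounded. -/
theorem image_of_continuous_polynomial_map (N : ℕ) (f : (Fin N → NNReal) → ℝ)
    (hf : ∃ d : ℕ, ADegLE d f) (hcont : Continuous f)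
    (hnonconst : ∃ t t' : Fin N → NNReal, f t ≠ f t') :
    Convex ℝ (Set.range f) ∧ ¬ Bornology.IsBounded (Set.range f) := by
  constructor
  · rw [Real.convex_iff_isPreconnected]
    exact (isPreconnected_range hcont)
  · intro hbdd
    obtain ⟨C, hC⟩ := isBounded_iff_forall_norm_le.mp hbdd
    obtain ⟨d, hd⟩ := hf
    obtain ⟨t, t', hne⟩ := hnonconst
    exact hne (constant_of_bounded d f C hd (fun u => hC _ ⟨u, rfl⟩) t t')

end PaperPoly
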